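/- The InfoNCE quantity with M samples is a lower bound on mutual information plus log M: for any critic function φ, E[(1/M) Σ_{p=1}^M (φ(y_p, z_p) − log((1/M) Σ_{q=1}^M exp(φ(y_p, z_q))))] ≤ I(y; z), where (y_p, z_p) are i.i.d. joint samples and in the inner sum z_q ranges over the batch (so q ≠ p gives independent pairs). -/

import Mathlib

open Finset

namespace CIA

variable {Y Z : Type*} [Fintype Y] [Fintype Z]

/-- Mutual information of a joint pmf on a product of finite spaces. -/
noncomputable def mutualInfo (p : Y × Z → ℝ) : ℝ :=
  ∑ x : Y × Z, p x *
    Real.log (p x / ((∑ b : Z, p (x.1, b)) * (∑ a : Y, p (a, x.2))))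

lemma sum_pi_prod {ι α : Type*} [Fintype ι] [DecidableEq ι] [Fintype α] (F : ι → α → ℝ) :
    ∑ s : ι → α, ∏ j, F j (s j) = ∏ j, ∑ x, F j x := by
  rw [Finset.prod_univ_sum, Fintype.piFinset_univ]

lemma prod_eq_single_mul_erase {ι : Type*} [Fintype ι] [DecidableEq ι] (k : ι) (f : ι → ℝ) :
    ∏ j, f j = f k * ∏ j ∈ univ.erase k, f j :=
  (Finset.mul_prod_erase univ f (mem_univ k)).symm

lemma sum_pi_prod_single {ι α : Type*} [Fintype ι] [DecidableEq ι] [Fintype α]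
    (p f : α → ℝ) (k : ι) :
    ∑ s : ι → α, ((∏ j, p (s j)) * f (s k)) =
      (∑ x, p x * f x) * ∏ _j ∈ univ.erase k, (∑ x, p x) := by
  set F : ι → α → ℝ := fun j x => if j = k then p x * f x else p x with hF
  have h1 : ∀ s : ι → α, (∏ j, p (s j)) * f (s k) = ∏ j, F j (s j) := by
    intro s
    rw [prod_eq_single_mul_erase k (fun j => F j (s j)),
        prod_eq_single_mul_erase k (fun j => p (s j))]
    have e1 : F k (s k) = p (s k) * f (s k) := if_pos rfl
    have e2 : ∏ j ∈ univ.erase k, F j (s j) = ∏ j ∈ univ.erase k, p (s j) :=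
      Finset.prod_congr rfl fun j hj => if_neg (Finset.ne_of_mem_erase hj)
    rw [e1, e2]; ring
  rw [Finset.sum_congr rfl fun s _ => h1 s, sum_pi_prod]
  rw [prod_eq_single_mul_erase k (fun j => ∑ x, F j x)]
  have e1 : (∑ x, F k x) = ∑ x, p x * f x :=
    Finset.sum_congr rfl fun x _ => if_pos rfl
  have e2 : ∏ j ∈ univ.erase k, (∑ x, F j x) = ∏ _j ∈ univ.erase k, (∑ x, p x) :=
    Finset.prod_congr rfl fun j hj =>
      Finset.sum_congr rfl fun x _ => if_neg (Finset.ne_of_mem_erase hj)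
  rw [e1, e2]

lemma sum_softmax {Z : Type*} [Fintype Z] {M : ℕ} (hM : 0 < M)
    (pZ : Z → ℝ) (hpZ : ∑ z, pZ z = 1) (ψ : Z → ℝ) (hψ : ∀ z, 0 < ψ z) (k : Fin M) :
    ∑ zv : Fin M → Z, (∏ j, pZ (zv j)) * (ψ (zv k) / ∑ q, ψ (zv q)) = 1 / M := by
  haveI : NeZero M := ⟨hM.ne'⟩
  have hS : ∀ zv : Fin M → Z, 0 < ∑ q, ψ (zv q) := fun zv =>
    Finset.sum_pos (fun q _ => hψ _) (univ_nonempty)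
  have hswap : ∀ k' : Fin M,
      (∑ zv : Fin M → Z, (∏ j, pZ (zv j)) * (ψ (zv k) / ∑ q, ψ (zv q)))
        = ∑ zv : Fin M → Z, (∏ j, pZ (zv j)) * (ψ (zv k') / ∑ q, ψ (zv q)) := by
    intro k'
    apply Fintype.sum_equiv (Equiv.arrowCongr (Equiv.swap k k') (Equiv.refl Z))
    intro zv
    have hcomp : ∀ j, (Equiv.arrowCongr (Equiv.swap k k') (Equiv.refl Z)) zv j
        = zv (Equiv.swap k k' j) := by
      intro j
      simp [Equiv.arrowCongr_apply, Equiv.symm_swap]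
    simp only [hcomp, Equiv.swap_apply_right]
    rw [Equiv.prod_comp (Equiv.swap k k') (fun j => pZ (zv j)),
        Equiv.sum_comp (Equiv.swap k k') (fun q => ψ (zv q))]
  have htot : ∑ k' : Fin M, (∑ zv : Fin M → Z, (∏ j, pZ (zv j)) * (ψ (zv k') / ∑ q, ψ (zv q))) = 1 := by
    rw [Finset.sum_comm]
    have : ∀ zv : Fin M → Z, (∑ k' : Fin M, (∏ j, pZ (zv j)) * (ψ (zv k') / ∑ q, ψ (zv q)))
        = ∏ j, pZ (zv j) := by
      intro zv
      rw [← Finset.mul_sum, ← Finset.sum_div, div_self (hS zv).ne', mul_one]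
    rw [Finset.sum_congr rfl fun zv _ => this zv]
    rw [sum_pi_prod (fun (_ : Fin M) (z : Z) => pZ z)]
    simp [hpZ]
  have : (M : ℝ) * (∑ zv : Fin M → Z, (∏ j, pZ (zv j)) * (ψ (zv k) / ∑ q, ψ (zv q))) = 1 := by
    rw [← htot]
    rw [Finset.sum_congr rfl fun k' _ => (hswap k').symm]
    simp [Finset.sum_const, Finset.card_univ, mul_comm]
  field_simp at this ⊢
  linarith [this]


lemma div_inv_mul (M : ℕ) (a S : ℝ) : a / ((1 / (M : ℝ)) * S) = M * (a / S) := by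
  rw [one_div, div_eq_mul_inv, mul_inv, inv_inv, div_eq_mul_inv]; ring

lemma A_eq_one {Y Z : Type*} [Fintype Y] [Fintype Z] {M : ℕ} (hM : 0 < M)
    (p : Y × Z → ℝ) (pY : Y → ℝ) (pZ : Z → ℝ)
    (hpZ : ∀ z, pZ z = ∑ a, p (a, z))
    (hpY1 : ∑ y, pY y = 1) (hpZ1 : ∑ z, pZ z = 1)
    (φ : Y → Z → ℝ) (k : Fin M) :
    ∑ s : Fin M → Y × Z, ((∏ j ∈ univ.erase k, p (s j)) *
        (pY (s k).1 * pZ (s k).2) *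
        (Real.exp (φ (s k).1 (s k).2) /
          ((1 / (M : ℝ)) * ∑ q : Fin M, Real.exp (φ (s k).1 (s q).2)))) = 1 := by
  haveI : NeZero M := ⟨hM.ne'⟩
  set f : (Fin M → Y × Z) → ℝ := fun s => ((∏ j ∈ univ.erase k, p (s j)) *
        (pY (s k).1 * pZ (s k).2) *
        (Real.exp (φ (s k).1 (s k).2) /
          ((1 / (M : ℝ)) * ∑ q : Fin M, Real.exp (φ (s k).1 (s q).2)))) with hf
  set G : (Fin M → Y) → (Fin M → Z) → ℝ := fun yv zv => f (fun j => (yv j, zv j)) with hG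
  have step1 : ∑ s : Fin M → Y × Z, f s = ∑ zv : Fin M → Z, ∑ yv : Fin M → Y, G yv zv := by
    rw [Fintype.sum_equiv (Equiv.arrowProdEquivProdArrow (Fin M) (fun _ => Y) (fun _ => Z)) f
      (fun pr => G pr.1 pr.2) (fun s => rfl), Fintype.sum_prod_type, Finset.sum_comm]
  rw [step1]
  have step2 : ∀ zv : Fin M → Z, ∑ yv : Fin M → Y, G yv zv =
      (∑ y, pY y * (pZ (zv k) *
        (Real.exp (φ y (zv k)) / ((1 / (M : ℝ)) * ∑ q : Fin M, Real.exp (φ y (zv q)))))) *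
      ∏ j ∈ univ.erase k, pZ (zv j) := by
    intro zv
    set F : Fin M → Y → ℝ := fun j y => if j = k then
        pY y * (pZ (zv k) * (Real.exp (φ y (zv k)) /
          ((1 / (M : ℝ)) * ∑ q : Fin M, Real.exp (φ y (zv q)))))
      else p (y, zv j) with hF
    have h1 : ∀ yv : Fin M → Y, G yv zv = ∏ j, F j (yv j) := by
      intro yv
      rw [prod_eq_single_mul_erase k (fun j => F j (yv j))]
      have e1 : F k (yv k) = pY (yv k) * (pZ (zv k) * (Real.exp (φ (yv k) (zv k)) /
          ((1 / (M : ℝ)) * ∑ q : Fin M, Real.exp (φ (yv k) (zv q))))) := if_pos rfl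
      have e2 : ∏ j ∈ univ.erase k, F j (yv j) = ∏ j ∈ univ.erase k, p (yv j, zv j) :=
        Finset.prod_congr rfl fun j hj => if_neg (Finset.ne_of_mem_erase hj)
      rw [e1, e2, hG, hf]
      ring
    rw [Finset.sum_congr rfl fun yv _ => h1 yv, sum_pi_prod F,
        prod_eq_single_mul_erase k (fun j => ∑ y, F j y)]
    have e1 : (∑ y, F k y) = ∑ y, pY y * (pZ (zv k) * (Real.exp (φ y (zv k)) /
          ((1 / (M : ℝ)) * ∑ q : Fin M, Real.exp (φ y (zv q))))) :=
      Finset.sum_congr rfl fun y _ => if_pos rfl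
    have e2 : ∏ j ∈ univ.erase k, (∑ y, F j y) = ∏ j ∈ univ.erase k, pZ (zv j) :=
      Finset.prod_congr rfl fun j hj => by
        rw [hpZ (zv j)]
        exact Finset.sum_congr rfl fun y _ => if_neg (Finset.ne_of_mem_erase hj)
    rw [e1, e2]
  rw [Finset.sum_congr rfl fun zv _ => step2 zv]
  have step3 : ∀ zv : Fin M → Z,
      (∑ y, pY y * (pZ (zv k) *
        (Real.exp (φ y (zv k)) / ((1 / (M : ℝ)) * ∑ q : Fin M, Real.exp (φ y (zv q)))))) *
      ∏ j ∈ univ.erase k, pZ (zv j)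
      = ∑ y, pY y * ((M : ℝ) * ((∏ j, pZ (zv j)) *
          (Real.exp (φ y (zv k)) / ∑ q : Fin M, Real.exp (φ y (zv q))))) := by
    intro zv
    rw [Finset.sum_mul]
    apply Finset.sum_congr rfl
    intro y _
    rw [div_inv_mul M, prod_eq_single_mul_erase k (fun j => pZ (zv j))]
    ring
  rw [Finset.sum_congr rfl fun zv _ => step3 zv, Finset.sum_comm]
  have step4 : ∀ y : Y, (∑ zv : Fin M → Z, pY y * ((M : ℝ) * ((∏ j, pZ (zv j)) *
      (Real.exp (φ y (zv k)) / ∑ q : Fin M, Real.exp (φ y (zv q)))))) = pY y := by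
    intro y
    rw [← Finset.mul_sum, ← Finset.mul_sum,
      sum_softmax hM pZ hpZ1 (fun z => Real.exp (φ y z)) (fun z => Real.exp_pos _) k]
    field_simp
  rw [Finset.sum_congr rfl fun y _ => step4 y, hpY1]


lemma Tk_le {M : ℕ} (hM : 0 < M) (p : Y × Z → ℝ) (φ : Y → Z → ℝ)
    (hp0 : ∀ x, 0 ≤ p x) (hp1 : ∑ x : Y × Z, p x = 1) (k : Fin M) :
    ∑ s : Fin M → Y × Z, (∏ j, p (s j)) *
        (φ (s k).1 (s k).2 -
          Real.log ((1 / (M : ℝ)) * ∑ q : Fin M, Real.exp (φ (s k).1 (s q).2)))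
      ≤ mutualInfo p := by
  haveI : NeZero M := ⟨hM.ne'⟩
  set pY : Y → ℝ := fun y => ∑ b, p (y, b) with hpYdef
  set pZ : Z → ℝ := fun z => ∑ a, p (a, z) with hpZdef
  have hpY1 : ∑ y, pY y = 1 := by rw [← hp1, Fintype.sum_prod_type]
  have hpZ1 : ∑ z, pZ z = 1 := by rw [← hp1, Fintype.sum_prod_type_right]
  set L : Y × Z → ℝ := fun x => Real.log (p x / (pY x.1 * pZ x.2)) with hL
  have I_eq : mutualInfo p = ∑ s : Fin M → Y × Z, (∏ j, p (s j)) * L (s k) := by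
    rw [sum_pi_prod_single p L k, hp1]
    simp [mutualInfo, hL]
    rfl
  -- the "independent-copy" weight
  set R : (Fin M → Y × Z) → ℝ := fun s => ((∏ j ∈ univ.erase k, p (s j)) *
        (pY (s k).1 * pZ (s k).2) *
        (Real.exp (φ (s k).1 (s k).2) /
          ((1 / (M : ℝ)) * ∑ q : Fin M, Real.exp (φ (s k).1 (s q).2)))) with hR
  have hRsum : ∑ s, R s = 1 :=
    A_eq_one hM p pY pZ (fun z => rfl) hpY1 hpZ1 φ k
  have hwsum : ∑ s : Fin M → Y × Z, (∏ j, p (s j)) = 1 := by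
    rw [sum_pi_prod (fun (_ : Fin M) x => p x), hp1]
    simp
  have key : ∀ s : Fin M → Y × Z,
      (∏ j, p (s j)) * (φ (s k).1 (s k).2 -
          Real.log ((1 / (M : ℝ)) * ∑ q : Fin M, Real.exp (φ (s k).1 (s q).2)))
        - (∏ j, p (s j)) * L (s k) ≤ R s - (∏ j, p (s j)) := by
    intro s
    set w := ∏ j, p (s j) with hw
    have hSpos : 0 < ∑ q : Fin M, Real.exp (φ (s k).1 (s q).2) :=
      Finset.sum_pos (fun q _ => Real.exp_pos _) univ_nonempty
    have hTpos : 0 < (1 / (M : ℝ)) * ∑ q : Fin M, Real.exp (φ (s k).1 (s q).2) := by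
      apply mul_pos _ hSpos
      simp [hM]
    have hRnn : 0 ≤ R s := by
      apply mul_nonneg
      apply mul_nonneg
      · exact Finset.prod_nonneg fun j _ => hp0 _
      · exact mul_nonneg (Finset.sum_nonneg fun b _ => hp0 _)
          (Finset.sum_nonneg fun a _ => hp0 _)
      · exact div_nonneg (Real.exp_pos _).le hTpos.le
    rcases eq_or_lt_of_le (Finset.prod_nonneg (fun j (_ : j ∈ univ) => hp0 (s j)) : (0:ℝ) ≤ w) with hw0 | hwpos
    · have hww : w = 0 := by rw [hw]; exact hw0.symm
      rw [hww]
      simpa using hRnn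
    · have hak : 0 < p (s k) := by
        rcases (hp0 (s k)).lt_or_eq with h | h
        · exact h
        · exfalso
          have h0 : (∏ j, p (s j)) = 0 := Finset.prod_eq_zero (mem_univ k) h.symm
          rw [h0] at hwpos; exact lt_irrefl _ hwpos
      have hpYpos : 0 < pY (s k).1 := by
        have h1 : p ((s k).1, (s k).2) ≤ pY (s k).1 :=
          Finset.single_le_sum (fun b _ => hp0 ((s k).1, b)) (mem_univ (s k).2)
        calc (0:ℝ) < p (s k) := hak
          _ ≤ pY (s k).1 := by simpa using h1
      have hpZpos : 0 < pZ (s k).2 := by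
        have h1 : p ((s k).1, (s k).2) ≤ pZ (s k).2 :=
          Finset.single_le_sum (fun a _ => hp0 (a, (s k).2)) (mem_univ (s k).1)
        calc (0:ℝ) < p (s k) := hak
          _ ≤ pZ (s k).2 := by simpa using h1
      set u : ℝ := (Real.exp (φ (s k).1 (s k).2) /
          ((1 / (M : ℝ)) * ∑ q : Fin M, Real.exp (φ (s k).1 (s q).2)))
          * (pY (s k).1 * pZ (s k).2 / p (s k)) with hu
      have hupos : 0 < u := by
        apply mul_pos
        · exact div_pos (Real.exp_pos _) hTpos
        · exact div_pos (mul_pos hpYpos hpZpos) hak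
      have hLk : L (s k) = Real.log (p (s k)) - Real.log (pY (s k).1 * pZ (s k).2) := by
        show Real.log (p (s k) / (pY (s k).1 * pZ (s k).2)) = _
        exact Real.log_div hak.ne' (mul_pos hpYpos hpZpos).ne'
      have hlogu : (φ (s k).1 (s k).2 -
          Real.log ((1 / (M : ℝ)) * ∑ q : Fin M, Real.exp (φ (s k).1 (s q).2)))
          - L (s k) = Real.log u := by
        rw [hu, Real.log_mul (div_pos (Real.exp_pos _) hTpos).ne'
            (div_pos (mul_pos hpYpos hpZpos) hak).ne',
          Real.log_div (Real.exp_pos _).ne' hTpos.ne',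
          Real.log_div (mul_pos hpYpos hpZpos).ne' hak.ne', Real.log_exp, hLk]
        ring
      have hlog_le : Real.log u ≤ u - 1 := Real.log_le_sub_one_of_pos hupos
      have hwu : w * u = R s := by
        rw [hu, hR, hw, prod_eq_single_mul_erase k (fun j => p (s j))]
        field_simp
      calc w * (φ (s k).1 (s k).2 -
          Real.log ((1 / (M : ℝ)) * ∑ q : Fin M, Real.exp (φ (s k).1 (s q).2)))
          - w * L (s k)
          = w * ((φ (s k).1 (s k).2 -
          Real.log ((1 / (M : ℝ)) * ∑ q : Fin M, Real.exp (φ (s k).1 (s q).2))) - L (s k)) := by ring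
        _ = w * Real.log u := by rw [hlogu]
        _ ≤ w * (u - 1) := by
            exact mul_le_mul_of_nonneg_left hlog_le hwpos.le
        _ = w * u - w := by ring
        _ = R s - w := by rw [hwu]
  have hsum := Finset.sum_le_sum (fun s (_ : s ∈ (univ : Finset (Fin M → Y × Z))) => key s)
  rw [Finset.sum_sub_distrib, Finset.sum_sub_distrib, hRsum, hwsum, ← I_eq] at hsum
  linarith [hsum]

/-- InfoNCE bound: for any critic `φ` and batch size `M`, the
expectation (over `M` i.i.d. samples `(y_p, z_p)` from the joint distribution) of
`(1/M) Σ_p [φ(y_p, z_p) − log((1/M) Σ_q exp φ(y_p, z_q))]` is at most the mutual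
information `I(y; z)`. -/
theorem infoNCE_le_mutualInfo (p : Y × Z → ℝ) (M : ℕ) (φ : Y → Z → ℝ)
    (hp0 : ∀ x, 0 ≤ p x) (hp1 : ∑ x : Y × Z, p x = 1) (hM : 0 < M) :
    (∑ s : Fin M → Y × Z, (∏ k : Fin M, p (s k)) *
        ((1 / (M : ℝ)) * ∑ k : Fin M,
          (φ (s k).1 (s k).2 -
            Real.log ((1 / (M : ℝ)) * ∑ q : Fin M, Real.exp (φ (s k).1 (s q).2))))) ≤
      mutualInfo p := by
  have hMne : (M : ℝ) ≠ 0 := Nat.cast_ne_zero.mpr hM.ne'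
  calc (∑ s : Fin M → Y × Z, (∏ k : Fin M, p (s k)) *
        ((1 / (M : ℝ)) * ∑ k : Fin M,
          (φ (s k).1 (s k).2 -
            Real.log ((1 / (M : ℝ)) * ∑ q : Fin M, Real.exp (φ (s k).1 (s q).2)))))
      = ∑ k : Fin M, (1 / (M : ℝ)) * (∑ s : Fin M → Y × Z, (∏ j : Fin M, p (s j)) *
          (φ (s k).1 (s k).2 -
            Real.log ((1 / (M : ℝ)) * ∑ q : Fin M, Real.exp (φ (s k).1 (s q).2)))) := by
        have expand : ∀ s : Fin M → Y × Z, (∏ k : Fin M, p (s k)) *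
            ((1 / (M : ℝ)) * ∑ k : Fin M,
              (φ (s k).1 (s k).2 -
                Real.log ((1 / (M : ℝ)) * ∑ q : Fin M, Real.exp (φ (s k).1 (s q).2))))
            = ∑ k : Fin M, (1 / (M : ℝ)) * ((∏ j : Fin M, p (s j)) *
              (φ (s k).1 (s k).2 -
                Real.log ((1 / (M : ℝ)) * ∑ q : Fin M, Real.exp (φ (s k).1 (s q).2)))) := by
          intro s
          rw [Finset.mul_sum, Finset.mul_sum]
          exact Finset.sum_congr rfl fun k _ => by ring
        rw [Finset.sum_congr rfl fun s _ => expand s, Finset.sum_comm]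
        exact Finset.sum_congr rfl fun k _ => (Finset.mul_sum _ _ _).symm
    _ ≤ ∑ _k : Fin M, (1 / (M : ℝ)) * mutualInfo p :=
        Finset.sum_le_sum fun k _ => mul_le_mul_of_nonneg_left
          (Tk_le hM p φ hp0 hp1 k) (by positivity)
    _ = mutualInfo p := by
        rw [Finset.sum_const, Finset.card_univ, Fintype.card_fin, nsmul_eq_mul]
        field_simp

end CIA
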